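/- Let q, u, v, ũ, ṽ be as in the basic dilation construction, and define ũũ = ũ ⊗ S and ṽṽ = ∑_m q^{-m} (u ⊗ id)^{-m} ṽ (u ⊗ id)^m ⊗ p_m on H ⊗ ℓ²(ℤ) ⊗ ℓ²(ℤ). If ‖vu - q·uv‖ ≤ δ with δ ∈ (0,1), then there is an isometry ι : H ⊗ ℓ²(ℤ) → H ⊗ ℓ²(ℤ) ⊗ ℓ²(ℤ) such that ‖ũ - ι*ũũι‖ < √δ and ‖ṽ - ι*ṽṽι‖ < √δ. -/

import Mathlib

/-- Integer powers of an operator `u`, where for `k < 0` we use `(u*)^(-k)`. -/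
noncomputable def opZpow {H : Type*} [NormedAddCommGroup H] [InnerProductSpace ℂ H]
    [CompleteSpace H] (u : H →L[ℂ] H) : ℤ → (H →L[ℂ] H)
  | Int.ofNat n => u ^ n
  | Int.negSucc n => (star u) ^ (n + 1)

open Finset

local notation "⟪" x ", " y "⟫" => @inner ℂ _ _ x y

set_option linter.unusedSectionVars false
set_option maxHeartbeats 1000000

namespace Stmt10Aux

variable {H : Type*} [NormedAddCommGroup H] [InnerProductSpace ℂ H] [CompleteSpace H]

lemma rpow_two_toReal (x : ℝ) : x ^ (2 : ENNReal).toReal = x ^ 2 := by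
  rw [ENNReal.toReal_ofNat, show ((2:ℝ)) = ((2:ℕ):ℝ) by norm_cast, Real.rpow_natCast]

lemma hasSum_norm_sq {α : Type*} (f : lp (fun _ : α => H) 2) :
    HasSum (fun i => ‖f i‖ ^ 2) (‖f‖ ^ 2) := by
  have h := lp.hasSum_norm (p := 2) (E := fun _ : α => H) (by norm_num) f
  simpa [rpow_two_toReal] using h

lemma memℓp_two {α : Type*} {f : ∀ _ : α, H} {B : ℝ}
    (h : HasSum (fun i => ‖f i‖ ^ 2) B) : Memℓp f 2 := by
  apply memℓp_gen
  have := h.summable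
  simpa [rpow_two_toReal] using this

lemma norm_sq_eq {α : Type*} (f : lp (fun _ : α => H) 2) {B : ℝ}
    (h : HasSum (fun i => ‖(f : ∀ _ : α, H) i‖ ^ 2) B) : ‖f‖ ^ 2 = B :=
  (hasSum_norm_sq f).unique h

lemma norm_eq_of {α : Type*} (f : lp (fun _ : α => H) 2) {A : ℝ} (hA : 0 ≤ A)
    (h : HasSum (fun i => ‖(f : ∀ _ : α, H) i‖ ^ 2) (A ^ 2)) : ‖f‖ = A := by
  have h2 := norm_sq_eq f h
  rw [← Real.sqrt_sq (norm_nonneg f), h2, Real.sqrt_sq hA]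

lemma norm_le_of_sq {α : Type*} (f : lp (fun _ : α => H) 2) {A : ℝ} (hA : 0 ≤ A)
    (h : ‖f‖ ^ 2 ≤ A ^ 2) : ‖f‖ ≤ A := by
  rw [← Real.sqrt_sq (norm_nonneg f), ← Real.sqrt_sq hA]
  exact Real.sqrt_le_sqrt h

lemma jinj (m : ℤ) : Function.Injective (fun k : ℤ => ((k, m) : ℤ × ℤ)) :=
  fun a b hab => by simpa using congrArg Prod.fst hab

lemma jrange {m : ℤ} {p : ℤ × ℤ} (hp : p ∉ Set.range (fun k : ℤ => ((k, m) : ℤ × ℤ))) :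
    p.2 ≠ m := by
  rintro h
  exact hp ⟨p.1, by rw [← h]⟩

/-- The function underlying the slice embedding. -/
def sliceFun (m : ℤ) (f : lp (fun _ : ℤ => H) 2) : ∀ _ : ℤ × ℤ, H :=
  fun p => if p.2 = m then f p.1 else 0

lemma hasSum_sliceFun (m : ℤ) (f : lp (fun _ : ℤ => H) 2) :
    HasSum (fun p : ℤ × ℤ => ‖sliceFun m f p‖ ^ 2) (‖f‖ ^ 2) := by
  refine ((jinj m).hasSum_iff ?_).mp ?_
  · intro p hp
    simp [sliceFun, jrange hp]
  · have he : ((fun p : ℤ × ℤ => ‖sliceFun m f p‖ ^ 2) ∘ fun k : ℤ => (k, m)) =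
        fun k => ‖f k‖ ^ 2 := by
      funext k
      simp [sliceFun]
    rw [he]
    exact hasSum_norm_sq f

/-- Slice embedding `E_m : ℓ²(ℤ,H) → ℓ²(ℤ×ℤ,H)`. -/
noncomputable def Emap (m : ℤ) : lp (fun _ : ℤ => H) 2 →L[ℂ] lp (fun _ : ℤ × ℤ => H) 2 :=
  LinearMap.mkContinuous
    { toFun := fun f => ⟨sliceFun m f, memℓp_two (hasSum_sliceFun m f)⟩
      map_add' := fun f g => by
        ext p
        by_cases h : p.2 = m <;>
          simp [sliceFun, h, lp.coeFn_add] <;>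
          refine Eq.trans ?_ (show sliceFun m f p + sliceFun m g p = _ from rfl) <;>
          simp [sliceFun, h]
      map_smul' := fun c f => by
        ext p
        by_cases h : p.2 = m <;>
          simp [sliceFun, h, lp.coeFn_smul] }
    1 (fun f => by
      rw [one_mul]
      exact le_of_eq (norm_eq_of _ (norm_nonneg f) (hasSum_sliceFun m f)))

lemma Emap_apply (m : ℤ) (f : lp (fun _ : ℤ => H) 2) (p : ℤ × ℤ) :
    (Emap m f : ∀ _ : ℤ × ℤ, H) p = if p.2 = m then f p.1 else 0 := rfl

lemma Emap_norm (m : ℤ) (f : lp (fun _ : ℤ => H) 2) : ‖Emap m f‖ = ‖f‖ :=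
  norm_eq_of _ (norm_nonneg f) (hasSum_sliceFun m f)

lemma summable_restFun (m : ℤ) (g : lp (fun _ : ℤ × ℤ => H) 2) :
    Summable (fun k : ℤ => ‖g (k, m)‖ ^ 2) :=
  (hasSum_norm_sq g).summable.comp_injective (jinj m)

/-- The lp element underlying the slice restriction. -/
noncomputable def restElt (m : ℤ) (g : lp (fun _ : ℤ × ℤ => H) 2) : lp (fun _ : ℤ => H) 2 :=
  ⟨fun k => g (k, m), memℓp_two (summable_restFun m g).hasSum⟩

lemma restElt_apply (m : ℤ) (g : lp (fun _ : ℤ × ℤ => H) 2) (k : ℤ) :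
    (restElt m g : ∀ _ : ℤ, H) k = g (k, m) := rfl

lemma restElt_norm_le (m : ℤ) (g : lp (fun _ : ℤ × ℤ => H) 2) : ‖restElt m g‖ ≤ ‖g‖ := by
  have h2 : HasSum (fun k : ℤ => ‖g (k, m)‖ ^ 2) (‖restElt m g‖ ^ 2) := by
    have h1 := hasSum_norm_sq (restElt m g)
    rwa [show (fun k : ℤ => ‖(restElt m g : ∀ _ : ℤ, H) k‖ ^ 2) =
      fun k : ℤ => ‖g (k, m)‖ ^ 2 from funext fun k => by rw [restElt_apply]] at h1
  exact norm_le_of_sq _ (norm_nonneg g)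
    (hasSum_le_inj _ (jinj m) (fun p _ => by positivity) (fun k => le_rfl) h2
      (hasSum_norm_sq g))

/-- Slice restriction `R_m : ℓ²(ℤ×ℤ,H) → ℓ²(ℤ,H)`. -/
noncomputable def Rmap (m : ℤ) : lp (fun _ : ℤ × ℤ => H) 2 →L[ℂ] lp (fun _ : ℤ => H) 2 :=
  LinearMap.mkContinuous
    { toFun := fun g => restElt m g
      map_add' := fun f g => by ext k; simp [restElt, lp.coeFn_add]; rfl
      map_smul' := fun c f => by ext k; simp [restElt, lp.coeFn_smul] }
    1 (fun g => by rw [one_mul]; exact restElt_norm_le m g)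

lemma Rmap_apply (m : ℤ) (g : lp (fun _ : ℤ × ℤ => H) 2) (k : ℤ) :
    (Rmap m g : ∀ _ : ℤ, H) k = g (k, m) := rfl

lemma inner_R_E (m : ℤ) (g : lp (fun _ : ℤ × ℤ => H) 2) (f : lp (fun _ : ℤ => H) 2) :
    ⟪Rmap m g, f⟫ = ⟪g, Emap m f⟫ := by
  rw [lp.inner_eq_tsum g (Emap m f)]
  symm
  refine HasSum.tsum_eq ?_
  refine ((jinj m).hasSum_iff ?_).mp ?_
  · intro p hp
    rw [Emap_apply, if_neg (jrange hp), inner_zero_right]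
  · have := lp.hasSum_inner (𝕜 := ℂ) (Rmap m g) f
    convert this using 2 with k
    simp [Emap_apply, Rmap_apply]

lemma adjoint_Emap (m : ℤ) :
    ContinuousLinearMap.adjoint (Emap (H := H) m) = Rmap m :=
  (((ContinuousLinearMap.eq_adjoint_iff _ _).mpr fun g f => inner_R_E m g f)).symm

lemma R_E (m : ℤ) (f : lp (fun _ : ℤ => H) 2) : Rmap m (Emap m f) = f := by
  ext k
  simp [Rmap_apply, Emap_apply]

lemma inner_E_E (m m' : ℤ) (f g : lp (fun _ : ℤ => H) 2) :
    ⟪Emap m f, Emap m' g⟫ = if m = m' then ⟪f, g⟫ else 0 := by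
  split_ifs with hmm
  · subst hmm
    rw [← inner_R_E m (Emap m f) g, R_E]
  · rw [lp.inner_eq_tsum]
    have : ∀ p : ℤ × ℤ, ⟪(Emap m f : ∀ _ : ℤ × ℤ, H) p, (Emap m' g : ∀ _ : ℤ × ℤ, H) p⟫ = 0 := by
      intro p
      by_cases h : p.2 = m
      · rw [Emap_apply m' g, if_neg (h ▸ hmm), inner_zero_right]
      · rw [Emap_apply m f, if_neg h, inner_zero_left]
    exact (tsum_congr this).trans tsum_zero

section Iota

noncomputable def ICC (N : ℕ) : Finset ℤ := Finset.Icc (-(N : ℤ)) N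

noncomputable def xic (N : ℕ) : ℝ := Real.sqrt (1 / (2 * (N : ℝ) + 1))

noncomputable def xi (N : ℕ) (m : ℤ) : ℝ := if m ∈ ICC N then xic N else 0

lemma xic_nonneg (N : ℕ) : 0 ≤ xic N := Real.sqrt_nonneg _

lemma xi_nonneg (N : ℕ) (m : ℤ) : 0 ≤ xi N m := by
  rw [xi]; split_ifs
  · exact xic_nonneg N
  · exact le_rfl

lemma xic_sq (N : ℕ) : xic N * xic N = 1 / (2 * (N : ℝ) + 1) :=
  Real.mul_self_sqrt (by positivity)

lemma xi_of_not_mem {N : ℕ} {m : ℤ} (h : m ∉ ICC N) : xi N m = 0 := by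
  rw [xi, if_neg h]

lemma card_ICC (N : ℕ) : (ICC N).card = 2 * N + 1 := by
  rw [ICC, Int.card_Icc]
  omega

lemma sum_xi_sq (N : ℕ) : ∑ m ∈ ICC N, xi N m ^ 2 = 1 := by
  have h : ∀ m ∈ ICC N, xi N m ^ 2 = 1 / (2 * (N : ℝ) + 1) := fun m hm => by
    rw [xi, if_pos hm, sq, xic_sq]
  rw [Finset.sum_congr rfl h, Finset.sum_const, card_ICC, nsmul_eq_mul]
  have : (0:ℝ) < 2 * (N : ℝ) + 1 := by positivity
  push_cast
  field_simp

noncomputable def iota (N : ℕ) : lp (fun _ : ℤ => H) 2 →L[ℂ] lp (fun _ : ℤ × ℤ => H) 2 :=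
  ∑ m ∈ ICC N, (xi N m : ℂ) • Emap m

lemma iota_apply (N : ℕ) (f : lp (fun _ : ℤ => H) 2) (p : ℤ × ℤ) :
    (iota N f : ∀ _ : ℤ × ℤ, H) p = (xi N p.2 : ℂ) • f p.1 := by
  rw [iota, ContinuousLinearMap.sum_apply, lp.coeFn_sum, Finset.sum_apply]
  have h : ∀ m ∈ ICC N, (((xi N m : ℂ) • Emap m) f : ∀ _ : ℤ × ℤ, H) p
      = if m = p.2 then (xi N m : ℂ) • f p.1 else 0 := by
    intro m _
    rw [ContinuousLinearMap.smul_apply, lp.coeFn_smul, Pi.smul_apply, Emap_apply]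
    by_cases h : p.2 = m
    · rw [if_pos h, if_pos h.symm]
    · rw [if_neg h, if_neg (Ne.symm h), smul_zero]
  rw [Finset.sum_congr rfl h, Finset.sum_ite_eq' (ICC N) p.2]
  by_cases h : p.2 ∈ ICC N
  · rw [if_pos h]
  · rw [if_neg h, xi_of_not_mem h, Complex.ofReal_zero, zero_smul]

lemma adjoint_iota (N : ℕ) : ContinuousLinearMap.adjoint (iota (H := H) N)
    = ∑ m ∈ ICC N, (xi N m : ℂ) • Rmap m := by
  symm
  rw [ContinuousLinearMap.eq_adjoint_iff]
  intro g f
  rw [ContinuousLinearMap.sum_apply, sum_inner, iota, ContinuousLinearMap.sum_apply, inner_sum]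
  refine Finset.sum_congr rfl fun m hm => ?_
  rw [ContinuousLinearMap.smul_apply, ContinuousLinearMap.smul_apply, inner_smul_left,
    inner_smul_right, Complex.conj_ofReal, inner_R_E]

lemma adjoint_iota_apply (N : ℕ) (h : lp (fun _ : ℤ × ℤ => H) 2) (k : ℤ) :
    (ContinuousLinearMap.adjoint (iota (H := H) N) h : ∀ _ : ℤ, H) k
      = ∑ m ∈ ICC N, (xi N m : ℂ) • h (k, m) := by
  rw [adjoint_iota, ContinuousLinearMap.sum_apply, lp.coeFn_sum, Finset.sum_apply]
  refine Finset.sum_congr rfl fun m _ => ?_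
  rw [ContinuousLinearMap.smul_apply, lp.coeFn_smul, Pi.smul_apply, Rmap_apply]

lemma inner_iota (N : ℕ) (f g : lp (fun _ : ℤ => H) 2) :
    ⟪iota N f, iota N g⟫ = ⟪f, g⟫ := by
  rw [iota, ContinuousLinearMap.sum_apply, ContinuousLinearMap.sum_apply, sum_inner]
  have key : ∀ m ∈ ICC N,
      ⟪(((xi N m : ℂ) • Emap m) f), (∑ m' ∈ ICC N, (((xi N m' : ℂ) • Emap m') g))⟫
        = (xi N m : ℂ) * (xi N m : ℂ) * ⟪f, g⟫ := by
    intro m hm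
    rw [inner_sum]
    have h2 : ∀ m' ∈ ICC N, ⟪(((xi N m : ℂ) • Emap m) f), (((xi N m' : ℂ) • Emap m') g)⟫
        = if m' = m then (xi N m : ℂ) * (xi N m : ℂ) * ⟪f, g⟫ else 0 := by
      intro m' _
      rw [ContinuousLinearMap.smul_apply, ContinuousLinearMap.smul_apply,
        inner_smul_left, inner_smul_right, Complex.conj_ofReal, inner_E_E]
      by_cases h : m = m'
      · rw [if_pos h, if_pos h.symm, h]
        ring
      · rw [if_neg h, if_neg (Ne.symm h), mul_zero, mul_zero]
    rw [Finset.sum_congr rfl h2, Finset.sum_ite_eq' (ICC N) m, if_pos hm]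
  rw [Finset.sum_congr rfl key, ← Finset.sum_mul]
  have h3 : ∑ m ∈ ICC N, (xi N m : ℂ) * (xi N m : ℂ) = 1 := by
    have h := sum_xi_sq N
    have : ∑ m ∈ ICC N, (xi N m : ℂ) * (xi N m : ℂ)
        = ∑ m ∈ ICC N, ((xi N m ^ 2 : ℝ) : ℂ) := by
      refine Finset.sum_congr rfl fun m _ => ?_
      push_cast
      ring
    rw [this]
    exact_mod_cast congrArg (fun x : ℝ => (x : ℂ)) h
  rw [h3, one_mul]

lemma norm_iota (N : ℕ) (f : lp (fun _ : ℤ => H) 2) : ‖iota N f‖ = ‖f‖ := by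
  have h := inner_iota N f f
  rw [inner_self_eq_norm_sq_to_K (𝕜 := ℂ), inner_self_eq_norm_sq_to_K (𝕜 := ℂ)] at h
  have h2 : ‖iota N f‖ ^ 2 = ‖f‖ ^ 2 := by exact_mod_cast h
  rw [← Real.sqrt_sq (norm_nonneg (iota N f)), h2, Real.sqrt_sq (norm_nonneg f)]

lemma isometry_iota (N : ℕ) : Isometry (iota (H := H) N) :=
  AddMonoidHomClass.isometry_of_norm _ (norm_iota N)

end Iota

section Wop

variable (q : ℂ) (u v : H →L[ℂ] H)

lemma opZpow_coe (hu : u ∈ unitary (H →L[ℂ] H)) (j : ℤ) :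
    opZpow u j = (((⟨u, hu⟩ : unitary (H →L[ℂ] H)) ^ j :
      unitary (H →L[ℂ] H)) : H →L[ℂ] H) := by
  cases j with
  | ofNat n =>
    show u ^ n = _
    rw [Int.ofNat_eq_coe, zpow_natCast, SubmonoidClass.coe_pow]
  | negSucc n =>
    show (star u) ^ (n + 1) = _
    rw [zpow_negSucc, ← Unitary.star_eq_inv, Unitary.coe_star, SubmonoidClass.coe_pow,
      star_pow]

lemma opZpow_mem (hu : u ∈ unitary (H →L[ℂ] H)) (j : ℤ) :
    opZpow u j ∈ unitary (H →L[ℂ] H) := by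
  rw [opZpow_coe u hu]
  exact SetLike.coe_mem _

lemma norm_conj_opZpow (hu : u ∈ unitary (H →L[ℂ] H)) (j j' : ℤ) (X : H →L[ℂ] H) :
    ‖opZpow u j * X * opZpow u j'‖ = ‖X‖ := by
  rw [CStarRing.norm_mul_mem_unitary _ (opZpow_mem u hu j'),
    CStarRing.norm_mem_unitary_mul _ (opZpow_mem u hu j)]

/-- The conjugated operators `w_j = q^j u^j v u^{-j}`. -/
noncomputable def wop (j : ℤ) : H →L[ℂ] H := q ^ j • (opZpow u j * v * opZpow u (-j))

lemma wop_def (j : ℤ) : wop q u v j = q ^ j • (opZpow u j * v * opZpow u (-j)) := rfl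

variable {q u v}

lemma wop_step (hq : ‖q‖ = 1) (hu : u ∈ unitary (H →L[ℂ] H)) {δ : ℝ}
    (h : ‖v * u - q • (u * v)‖ ≤ δ) (j : ℤ) :
    ‖wop q u v (j + 1) - wop q u v j‖ ≤ δ := by
  have hq0 : q ≠ 0 := by
    intro h0
    rw [h0] at hq
    simp at hq
  have hmem := Unitary.mem_iff.mp hu
  have e1 : opZpow u (j + 1) = opZpow u j * u := by
    rw [opZpow_coe u hu, opZpow_coe u hu, zpow_add_one]
    rfl
  have e2 : opZpow u (-(j + 1)) = star u * opZpow u (-j) := by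
    rw [opZpow_coe u hu, opZpow_coe u hu, show -(j + 1) = -1 + -j by ring, zpow_add,
      zpow_neg_one]
    rfl
  have hassoc : opZpow u j * u * v * (star u * opZpow u (-j))
      = opZpow u j * (u * v * star u) * opZpow u (-j) := by
    simp only [mul_assoc]
  have key : wop q u v (j + 1) - wop q u v j
      = q ^ j • (opZpow u j * (q • (u * v * star u) - v) * opZpow u (-j)) := by
    rw [wop_def, wop_def, e1, e2, hassoc, mul_sub, sub_mul, smul_sub, mul_smul_comm,
      smul_mul_assoc, smul_smul, ← zpow_add_one₀ hq0]
  have hX : q • (u * v * star u) - v = (q • (u * v) - v * u) * star u := by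
    rw [sub_mul, smul_mul_assoc, mul_assoc, mul_assoc, hmem.2, mul_one]
  rw [key, norm_smul, norm_zpow, hq, one_zpow, one_mul, norm_conj_opZpow u hu, hX,
    CStarRing.norm_mul_mem_unitary _ (Unitary.star_mem hu), norm_sub_rev]
  exact h

lemma wop_nat (hq : ‖q‖ = 1) (hu : u ∈ unitary (H →L[ℂ] H)) {δ : ℝ}
    (h : ‖v * u - q • (u * v)‖ ≤ δ) (n : ℕ) (j : ℤ) :
    ‖wop q u v (j + n) - wop q u v j‖ ≤ n * δ := by
  induction n generalizing j with
  | zero => simp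
  | succ n ih =>
    have h1 := wop_step hq hu h (j + n)
    have h2 := ih j
    have h3 := dist_triangle (wop q u v (j + n + 1)) (wop q u v (j + n)) (wop q u v j)
    rw [dist_eq_norm, dist_eq_norm, dist_eq_norm] at h3
    have he : (j + ((n : ℤ) + 1)) = j + n + 1 := by ring
    push_cast
    rw [he]
    push_cast at h2
    linarith

lemma wop_lip (hq : ‖q‖ = 1) (hu : u ∈ unitary (H →L[ℂ] H)) {δ : ℝ} (hδ : 0 ≤ δ)
    (h : ‖v * u - q • (u * v)‖ ≤ δ) (a b : ℤ) :
    ‖wop q u v a - wop q u v b‖ ≤ ((|a - b| : ℤ) : ℝ) * δ := by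
  rcases le_total b a with hab | hab
  · have e : a = b + ((a - b).toNat : ℤ) := by omega
    have h1 := wop_nat hq hu h (a - b).toNat b
    rw [← e] at h1
    refine h1.trans (le_of_eq ?_)
    have e2 : ((a - b).toNat : ℤ) = |a - b| := by
      rw [abs_of_nonneg (by omega : (0:ℤ) ≤ a - b)]
      exact Int.toNat_of_nonneg (by omega)
    rw [← e2]
    push_cast
    ring
  · have e : b = a + ((b - a).toNat : ℤ) := by omega
    have h1 := wop_nat hq hu h (b - a).toNat a
    rw [← e, norm_sub_rev] at h1
    refine h1.trans (le_of_eq ?_)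
    have e2 : ((b - a).toNat : ℤ) = |a - b| := by
      rw [abs_sub_comm, abs_of_nonneg (by omega : (0:ℤ) ≤ b - a)]
      exact Int.toNat_of_nonneg (by omega)
    rw [← e2]
    push_cast
    ring

end Wop

lemma sum_abs_ICC (N : ℕ) : ∑ m ∈ ICC N, |m| = (N : ℤ) * (N + 1) := by
  induction N with
  | zero => simp [ICC]
  | succ n ih =>
    have hdec : ICC (n + 1) = insert (-(n + 1) : ℤ) (insert ((n + 1) : ℤ) (ICC n)) := by
      ext m
      simp only [ICC, Finset.mem_Icc, Finset.mem_insert]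
      push_cast
      omega
    rw [hdec, Finset.sum_insert (by simp only [ICC, Finset.mem_Icc, Finset.mem_insert]; push_cast; omega),
      Finset.sum_insert (by simp only [ICC, Finset.mem_Icc]; push_cast; omega), ih]
    have h1 : |(-(n + 1) : ℤ)| = (n : ℤ) + 1 := by
      rw [abs_neg, abs_of_nonneg (by positivity)]
    have h2 : |((n + 1) : ℤ)| = (n : ℤ) + 1 := by
      rw [abs_of_nonneg (by positivity)]
    rw [h1, h2]
    push_cast
    ring

lemma sum_xi_shift (N : ℕ) :
    ∑ m ∈ ICC N, xi N m * xi N (m - 1) = 1 - 1 / (2 * (N : ℝ) + 1) := by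
  have hdec : ICC N = insert (-(N : ℤ)) (Finset.Icc (-(N : ℤ) + 1) N) := by
    ext m
    simp only [ICC, Finset.mem_Icc, Finset.mem_insert]
    omega
  rw [hdec, Finset.sum_insert (by simp only [Finset.mem_Icc]; omega)]
  have h0 : xi N ((-(N : ℤ)) - 1) = 0 :=
    xi_of_not_mem (by simp only [ICC, Finset.mem_Icc]; omega)
  rw [h0, mul_zero, zero_add]
  have hc : ∀ m ∈ Finset.Icc (-(N : ℤ) + 1) (N : ℤ),
      xi N m * xi N (m - 1) = 1 / (2 * (N : ℝ) + 1) := by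
    intro m hm
    rw [Finset.mem_Icc] at hm
    rw [xi, if_pos (by simp only [ICC, Finset.mem_Icc]; omega),
      xi, if_pos (by simp only [ICC, Finset.mem_Icc]; omega), xic_sq]
  rw [Finset.sum_congr rfl hc, Finset.sum_const, nsmul_eq_mul]
  have hcard : (Finset.Icc (-(N : ℤ) + 1) (N : ℤ)).card = 2 * N := by
    rw [Int.card_Icc]
    omega
  rw [hcard]
  have hpos : (0:ℝ) < 2 * (N : ℝ) + 1 := by positivity
  push_cast
  field_simp
  ring

end Stmt10Aux


local notation "⟪⟪" x ", " y "⟫⟫" => @inner ℂ _ _ x y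

/-- Let `u, v` be unitaries with `‖vu - q·uv‖ ≤ δ`, `δ ∈ (0,1)`, and let
`ũ = u ⊗ S`, `ṽ = ∑_k q^k u^k v u^{-k} ⊗ p_k` on `H ⊗ ℓ²(ℤ)` (modeled as `ℓ²(ℤ, H)`).
Define on `H ⊗ ℓ²(ℤ) ⊗ ℓ²(ℤ)` (modeled as `ℓ²(ℤ × ℤ, H)`) the operators `ũũ = ũ ⊗ S`,
i.e. `(ũũ f)(k,m) = u (f (k-1, m-1))`, and
`ṽṽ = ∑_m q^{-m} (u ⊗ id)^{-m} ṽ (u ⊗ id)^m ⊗ p_m`, i.e.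
`(ṽṽ f)(k,m) = q^{k-m} u^{k-m} v u^{m-k} (f (k,m))`. Then there is an isometry
`ι : H ⊗ ℓ²(ℤ) → H ⊗ ℓ²(ℤ) ⊗ ℓ²(ℤ)` with `‖ũ - ι*ũũι‖ < √δ` and `‖ṽ - ι*ṽṽι‖ < √δ`. -/
theorem stmt_10 {H : Type*} [NormedAddCommGroup H] [InnerProductSpace ℂ H] [CompleteSpace H]
    (q : ℂ) (hq : ‖q‖ = 1) (δ : ℝ) (hδ0 : 0 < δ) (hδ1 : δ < 1) (u v : H →L[ℂ] H)
    (hu : u ∈ unitary (H →L[ℂ] H)) (hv : v ∈ unitary (H →L[ℂ] H))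
    (h : ‖v * u - q • (u * v)‖ ≤ δ)
    (Ut Vt : lp (fun _ : ℤ => H) 2 →L[ℂ] lp (fun _ : ℤ => H) 2)
    (hUt : ∀ (f : lp (fun _ : ℤ => H) 2) (k : ℤ), (Ut f : ∀ _ : ℤ, H) k = u (f (k - 1)))
    (hVt : ∀ (f : lp (fun _ : ℤ => H) 2) (k : ℤ),
      (Vt f : ∀ _ : ℤ, H) k = q ^ k • (opZpow u k * v * opZpow u (-k)) (f k))
    (Uu Vv : lp (fun _ : ℤ × ℤ => H) 2 →L[ℂ] lp (fun _ : ℤ × ℤ => H) 2)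
    (hUu : ∀ (f : lp (fun _ : ℤ × ℤ => H) 2) (p : ℤ × ℤ),
      (Uu f : ∀ _ : ℤ × ℤ, H) p = u (f (p.1 - 1, p.2 - 1)))
    (hVv : ∀ (f : lp (fun _ : ℤ × ℤ => H) 2) (p : ℤ × ℤ),
      (Vv f : ∀ _ : ℤ × ℤ, H) p =
        q ^ (p.1 - p.2) • (opZpow u (p.1 - p.2) * v * opZpow u (p.2 - p.1)) (f p)) :
    ∃ ι : lp (fun _ : ℤ => H) 2 →L[ℂ] lp (fun _ : ℤ × ℤ => H) 2,
      Isometry ι ∧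
      ‖Ut - ContinuousLinearMap.adjoint ι ∘L Uu ∘L ι‖ < Real.sqrt δ ∧
      ‖Vt - ContinuousLinearMap.adjoint ι ∘L Vv ∘L ι‖ < Real.sqrt δ := by
  classical
  obtain ⟨hu1, hu2⟩ := Unitary.mem_iff.mp hu
  have ht0 : 0 < Real.sqrt δ := Real.sqrt_pos.mpr hδ0
  set t := Real.sqrt δ with htdef
  have ht1 : t < 1 := by
    have h1 := Real.sqrt_lt_sqrt hδ0.le hδ1
    rwa [Real.sqrt_one] at h1
  have htsq : t ^ 2 = δ := Real.sq_sqrt hδ0.le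
  set N : ℕ := max 1 ⌈1 / (2 * t)⌉₊ with hNdef
  have hN1 : 1 ≤ N := le_max_left _ _
  have hNr : (0:ℝ) < 2 * (N:ℝ) + 1 := by positivity
  set r : ℝ := 1 / (2 * (N:ℝ) + 1) with hrdef
  have hr0 : 0 < r := by positivity
  have hNceil : 1 / (2 * t) ≤ (N : ℝ) := by
    refine (Nat.le_ceil _).trans ?_
    exact_mod_cast le_max_right 1 ⌈1 / (2 * t)⌉₊
  have main1 : r < t := by
    rw [hrdef, div_lt_iff₀ hNr]
    have h2 : t * (1 / (2 * t)) ≤ t * (N:ℝ) := mul_le_mul_of_nonneg_left hNceil ht0.le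
    have h3 : t * (1 / (2 * t)) = 1 / 2 := by field_simp
    nlinarith
  set EE : ℝ := r * ((N:ℝ) * ((N:ℝ) + 1)) * δ with hEEdef
  have hEE0 : 0 ≤ EE := by positivity
  have main2 : EE < t := by
    have hgoal : (N:ℝ) * ((N:ℝ) + 1) * δ < t * (2 * (N:ℝ) + 1) := by
      rcases eq_or_lt_of_le hN1 with hN1' | hN2
      · rw [← hN1', ← htsq]
        push_cast
        nlinarith [mul_pos ht0 (show (0:ℝ) < 3 - 2 * t by linarith)]
      · have hceil : N = ⌈1 / (2 * t)⌉₊ := by omega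
        have hlt : ((N:ℝ) - 1) < 1 / (2 * t) := by
          have h4 : (N - 1 : ℕ) < ⌈1 / (2 * t)⌉₊ := by omega
          have h5 := Nat.lt_ceil.mp h4
          rw [Nat.cast_sub hN1] at h5
          simpa using h5
        have hN2R : (2:ℝ) ≤ (N:ℝ) := by exact_mod_cast (by omega : 2 ≤ N)
        have hpos2 : (0:ℝ) < 2 * ((N:ℝ) - 1) := by linarith
        have key : t * (2 * ((N:ℝ) - 1)) < 1 := by
          have h6 := (lt_div_iff₀ (by positivity : (0:ℝ) < 2 * t)).mp hlt
          nlinarith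
        have hstep1 : t * ((N:ℝ) * ((N:ℝ) + 1)) < 2 * (N:ℝ) + 1 := by
          have hA : t < 1 / (2 * ((N:ℝ) - 1)) := by
            rw [lt_div_iff₀ hpos2]
            linarith
          have hB : t * ((N:ℝ) * ((N:ℝ) + 1))
              < (1 / (2 * ((N:ℝ) - 1))) * ((N:ℝ) * ((N:ℝ) + 1)) :=
            mul_lt_mul_of_pos_right hA (by nlinarith)
          have hC : (1 / (2 * ((N:ℝ) - 1))) * ((N:ℝ) * ((N:ℝ) + 1)) ≤ 2 * (N:ℝ) + 1 := by
            rw [div_mul_eq_mul_div, div_le_iff₀ hpos2]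
            nlinarith
          linarith
        calc (N:ℝ) * ((N:ℝ) + 1) * δ = t * (t * ((N:ℝ) * ((N:ℝ) + 1))) := by
              rw [← htsq]; ring
          _ < t * (2 * (N:ℝ) + 1) := mul_lt_mul_of_pos_left hstep1 ht0
    rw [hEEdef, hrdef]
    rw [div_mul_eq_mul_div, div_mul_eq_mul_div, div_lt_iff₀ hNr]
    calc 1 * ((N:ℝ) * ((N:ℝ) + 1)) * δ = (N:ℝ) * ((N:ℝ) + 1) * δ := by ring
      _ < t * (2 * (N:ℝ) + 1) := hgoal
  have hnu : ∀ x : H, ‖u x‖ = ‖x‖ := by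
    intro x
    have h2 : ContinuousLinearMap.adjoint u (u x) = x := by
      have h3 := congrFun (congrArg (fun A : H →L[ℂ] H => (A : H → H)) hu1) x
      simpa [ContinuousLinearMap.mul_apply, ContinuousLinearMap.star_eq_adjoint] using h3
    have h4 : (⟪⟪u x, u x⟫⟫) = (⟪⟪x, x⟫⟫) := by
      have h5 := ContinuousLinearMap.adjoint_inner_left u x (u x)
      rw [h2] at h5
      exact h5.symm
    rw [inner_self_eq_norm_sq_to_K (𝕜 := ℂ), inner_self_eq_norm_sq_to_K (𝕜 := ℂ)] at h4
    have h7 : ‖u x‖ ^ 2 = ‖x‖ ^ 2 := by exact_mod_cast h4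
    rw [← Real.sqrt_sq (norm_nonneg (u x)), h7, Real.sqrt_sq (norm_nonneg x)]
  refine ⟨Stmt10Aux.iota N, Stmt10Aux.isometry_iota N, ?_, ?_⟩
  · -- the U bound
    set D := Ut - ContinuousLinearMap.adjoint (Stmt10Aux.iota (H := H) N) ∘L Uu ∘L
      Stmt10Aux.iota N with hD
    have hcoord : ∀ (f : lp (fun _ : ℤ => H) 2) (k : ℤ),
        (D f : ∀ _ : ℤ, H) k = ((r : ℝ) : ℂ) • u (f (k - 1)) := by
      intro f k
      rw [hD, ContinuousLinearMap.sub_apply, lp.coeFn_sub, Pi.sub_apply,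
        ContinuousLinearMap.comp_apply, ContinuousLinearMap.comp_apply,
        Stmt10Aux.adjoint_iota_apply, hUt]
      have hterm : ∀ m ∈ Stmt10Aux.ICC N,
          (Stmt10Aux.xi N m : ℂ) • (Uu (Stmt10Aux.iota N f) : ∀ _ : ℤ × ℤ, H) (k, m)
            = ((Stmt10Aux.xi N m * Stmt10Aux.xi N (m - 1) : ℝ) : ℂ) • u (f (k - 1)) := by
        intro m _
        have h1 : (Uu (Stmt10Aux.iota N f) : ∀ _ : ℤ × ℤ, H) (k, m)
            = u ((Stmt10Aux.iota N f) (k - 1, m - 1)) := hUu _ (k, m)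
        have h2 : ((Stmt10Aux.iota N f) : ∀ _ : ℤ × ℤ, H) (k - 1, m - 1)
            = (Stmt10Aux.xi N (m - 1) : ℂ) • f (k - 1) :=
          Stmt10Aux.iota_apply N f (k - 1, m - 1)
        rw [h1, h2, ContinuousLinearMap.map_smul, smul_smul, Complex.ofReal_mul]
      rw [Finset.sum_congr rfl hterm, ← Finset.sum_smul]
      have hsc : (∑ m ∈ Stmt10Aux.ICC N,
          ((Stmt10Aux.xi N m * Stmt10Aux.xi N (m - 1) : ℝ) : ℂ)) = ((1 - r : ℝ) : ℂ) := by
        rw [hrdef]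
        exact_mod_cast congrArg (fun x : ℝ => (x : ℂ)) (Stmt10Aux.sum_xi_shift N)
      rw [hsc]
      have hfinal : ∀ X : H, X - ((1 - r : ℝ) : ℂ) • X = ((r : ℝ) : ℂ) • X := by
        intro X
        have h8 : ((r : ℝ) : ℂ) = 1 - ((1 - r : ℝ) : ℂ) := by push_cast; ring
        rw [h8, sub_smul, one_smul]
      exact hfinal _
    have hle : ‖D‖ ≤ r := by
      refine ContinuousLinearMap.opNorm_le_bound _ hr0.le fun f => ?_
      have he : (fun k : ℤ => ‖(D f : ∀ _ : ℤ, H) k‖ ^ 2)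
          = fun k => r ^ 2 * ‖f (k - 1)‖ ^ 2 := by
        funext k
        rw [hcoord f k, norm_smul, hnu]
        have h9 : ‖((r : ℝ) : ℂ)‖ = r := by
          rw [Complex.norm_real, Real.norm_eq_abs, abs_of_nonneg hr0.le]
        rw [h9, mul_pow]
      have hshift : HasSum (fun k : ℤ => ‖f (k - 1)‖ ^ 2) (‖f‖ ^ 2) :=
        ((Equiv.subRight (1 : ℤ)).hasSum_iff).mpr (Stmt10Aux.hasSum_norm_sq f)
      have hsum : HasSum (fun k : ℤ => ‖(D f : ∀ _ : ℤ, H) k‖ ^ 2) ((r * ‖f‖) ^ 2) := by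
        rw [he, mul_pow]
        exact hshift.mul_left _
      exact le_of_eq (Stmt10Aux.norm_eq_of _ (by positivity) hsum)
    exact lt_of_le_of_lt hle main1
  · -- the V bound
    set D := Vt - ContinuousLinearMap.adjoint (Stmt10Aux.iota (H := H) N) ∘L Vv ∘L
      Stmt10Aux.iota N with hD
    have hxs : (∑ m ∈ Stmt10Aux.ICC N, ((Stmt10Aux.xi N m ^ 2 : ℝ) : ℂ)) = 1 := by
      exact_mod_cast congrArg (fun x : ℝ => (x : ℂ)) (Stmt10Aux.sum_xi_sq N)
    have hcoord : ∀ (f : lp (fun _ : ℤ => H) 2) (k : ℤ),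
        (D f : ∀ _ : ℤ, H) k
          = ∑ m ∈ Stmt10Aux.ICC N, ((Stmt10Aux.xi N m ^ 2 : ℝ) : ℂ) •
              ((Stmt10Aux.wop q u v k - Stmt10Aux.wop q u v (k - m)) (f k)) := by
      intro f k
      rw [hD, ContinuousLinearMap.sub_apply, lp.coeFn_sub, Pi.sub_apply,
        ContinuousLinearMap.comp_apply, ContinuousLinearMap.comp_apply,
        Stmt10Aux.adjoint_iota_apply]
      have hVtk : (Vt f : ∀ _ : ℤ, H) k = Stmt10Aux.wop q u v k (f k) := by
        rw [hVt, Stmt10Aux.wop_def, ContinuousLinearMap.smul_apply]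
      have hterm : ∀ m ∈ Stmt10Aux.ICC N,
          (Stmt10Aux.xi N m : ℂ) • (Vv (Stmt10Aux.iota N f) : ∀ _ : ℤ × ℤ, H) (k, m)
            = ((Stmt10Aux.xi N m ^ 2 : ℝ) : ℂ) • (Stmt10Aux.wop q u v (k - m) (f k)) := by
        intro m _
        have h1 : (Vv (Stmt10Aux.iota N f) : ∀ _ : ℤ × ℤ, H) (k, m)
            = q ^ (k - m) • (opZpow u (k - m) * v * opZpow u (m - k))
                ((Stmt10Aux.iota N f) (k, m)) := hVv _ (k, m)
        have h2 : ((Stmt10Aux.iota N f) : ∀ _ : ℤ × ℤ, H) (k, m)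
            = (Stmt10Aux.xi N m : ℂ) • f k := Stmt10Aux.iota_apply N f (k, m)
        rw [h1, h2, show m - k = -(k - m) from by ring, ContinuousLinearMap.map_smul,
          smul_smul, smul_smul, Stmt10Aux.wop_def, ContinuousLinearMap.smul_apply, smul_smul]
        congr 1
        push_cast
        ring
      rw [hVtk, Finset.sum_congr rfl hterm]
      have hW : Stmt10Aux.wop q u v k (f k) = ∑ m ∈ Stmt10Aux.ICC N,
          ((Stmt10Aux.xi N m ^ 2 : ℝ) : ℂ) • Stmt10Aux.wop q u v k (f k) := by
        rw [← Finset.sum_smul, hxs, one_smul]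
      rw [hW, ← Finset.sum_sub_distrib]
      refine Finset.sum_congr rfl fun m _ => ?_
      rw [← smul_sub, ContinuousLinearMap.sub_apply]
    have hle : ‖D‖ ≤ EE := by
      refine ContinuousLinearMap.opNorm_le_bound _ hEE0 fun f => ?_
      have hbnd : ∀ k : ℤ, ‖(D f : ∀ _ : ℤ, H) k‖ ≤ EE * ‖f k‖ := by
        intro k
        rw [hcoord f k]
        refine (norm_sum_le _ _).trans ?_
        have hb2 : ∀ m ∈ Stmt10Aux.ICC N,
            ‖((Stmt10Aux.xi N m ^ 2 : ℝ) : ℂ) •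
              ((Stmt10Aux.wop q u v k - Stmt10Aux.wop q u v (k - m)) (f k))‖
              ≤ Stmt10Aux.xi N m ^ 2 * (((|m| : ℤ) : ℝ) * δ * ‖f k‖) := by
          intro m _
          rw [norm_smul]
          have h1 : ‖((Stmt10Aux.xi N m ^ 2 : ℝ) : ℂ)‖ = Stmt10Aux.xi N m ^ 2 := by
            rw [Complex.norm_real, Real.norm_eq_abs, abs_of_nonneg (by positivity)]
          rw [h1]
          refine mul_le_mul_of_nonneg_left ?_ (by positivity)
          refine (ContinuousLinearMap.le_opNorm _ _).trans ?_
          have h2 := Stmt10Aux.wop_lip hq hu hδ0.le h k (k - m)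
          rw [show k - (k - m) = m from by ring] at h2
          exact mul_le_mul_of_nonneg_right h2 (norm_nonneg _)
        refine (Finset.sum_le_sum hb2).trans (le_of_eq ?_)
        have habs : ∑ m ∈ Stmt10Aux.ICC N, ((|m| : ℤ) : ℝ) = (N : ℝ) * ((N : ℝ) + 1) := by
          rw [← Int.cast_sum, Stmt10Aux.sum_abs_ICC N]
          push_cast
          ring
        calc ∑ m ∈ Stmt10Aux.ICC N,
              Stmt10Aux.xi N m ^ 2 * (((|m| : ℤ) : ℝ) * δ * ‖f k‖)
            = ∑ m ∈ Stmt10Aux.ICC N, ((|m| : ℤ) : ℝ) * (r * δ * ‖f k‖) := by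
              refine Finset.sum_congr rfl fun m hm => ?_
              rw [Stmt10Aux.xi, if_pos hm, sq, Stmt10Aux.xic_sq, ← hrdef]
              ring
          _ = (∑ m ∈ Stmt10Aux.ICC N, ((|m| : ℤ) : ℝ)) * (r * δ * ‖f k‖) :=
              (Finset.sum_mul _ _ _).symm
          _ = EE * ‖f k‖ := by rw [habs, hEEdef]; ring
      have hs1 := Stmt10Aux.hasSum_norm_sq (D f)
      have hs2 := (Stmt10Aux.hasSum_norm_sq f).mul_left (EE ^ 2)
      have hsq : ‖D f‖ ^ 2 ≤ EE ^ 2 * ‖f‖ ^ 2 := by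
        refine hasSum_le (fun k => ?_) hs1 hs2
        have h5 := pow_le_pow_left₀ (norm_nonneg _) (hbnd k) 2
        rw [mul_pow] at h5
        exact h5
      refine Stmt10Aux.norm_le_of_sq _ (by positivity) ?_
      rw [mul_pow]
      exact hsq
    exact lt_of_le_of_lt hle main2
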